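/- For every positive integer N, the truncated double zeta value ζ_{<N}(1,2) := Σ_{0<n_1<n_2<N} 1/(n_1 n_2^2) equals Σ_{0<m_1<m_2≤m_3<N} 1/((N−m_1)(N−m_2) m_3). -/

import Mathlib

open Finset

lemma sum_reflect (M : ℕ) (s t : Finset ℕ) (f : ℕ → ℚ)
    (h1 : ∀ k ∈ s, k ≤ M ∧ M - k ∈ t) (h2 : ∀ k ∈ t, k ≤ M ∧ M - k ∈ s) :
    ∑ k ∈ s, f (M - k) = ∑ k ∈ t, f k := by
  refine Finset.sum_nbij' (fun k => M - k) (fun k => M - k) ?_ ?_ ?_ ?_ ?_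
  · exact fun a ha => (h1 a ha).2
  · exact fun a ha => (h2 a ha).2
  · intro a ha; have := (h1 a ha).1; show M - (M - a) = a; omega
  · intro a ha; have := (h2 a ha).1; show M - (M - a) = a; omega
  · intro a ha; rfl

lemma sum_swap_lt (N : ℕ) (f : ℕ → ℕ → ℚ) :
    ∑ b ∈ Ioo 0 N, ∑ a ∈ Ioo 0 b, f a b = ∑ a ∈ Ioo 0 N, ∑ b ∈ Ioo a N, f a b := by
  have h1 : ∀ b ∈ Ioo 0 N, ∑ a ∈ Ioo 0 b, f a b
      = ∑ a ∈ Ioo 0 N, if a < b then f a b else 0 := by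
    intro b hb
    rw [← Finset.sum_filter]
    congr 1
    ext a
    simp only [mem_filter, mem_Ioo] at *
    omega
  have h2 : ∀ a ∈ Ioo 0 N, ∑ b ∈ Ioo a N, f a b
      = ∑ b ∈ Ioo 0 N, if a < b then f a b else 0 := by
    intro a ha
    rw [← Finset.sum_filter]
    congr 1
    ext b
    simp only [mem_filter, mem_Ioo] at *
    omega
  rw [Finset.sum_congr rfl h1, Finset.sum_comm, ← Finset.sum_congr rfl h2]

lemma rhs_eq (N : ℕ) :
    ∑ m1 ∈ Finset.Ioo 0 N, ∑ m2 ∈ Finset.Ioo m1 N, ∑ m3 ∈ Finset.Icc m2 (N - 1),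
      (1 : ℚ) / (((N : ℚ) - (m1 : ℚ)) * ((N : ℚ) - (m2 : ℚ)) * (m3 : ℚ)) =
    ∑ n2 ∈ Ioo 0 N, ∑ n1 ∈ Ioo 0 n2, ∑ i ∈ Icc 1 n1,
      (1 : ℚ) / ((n1 : ℚ) * (n2 : ℚ) * ((N : ℚ) - (i : ℚ))) := by
  rw [← sum_reflect N (Ioo 0 N) (Ioo 0 N)
    (fun m1 => ∑ m2 ∈ Finset.Ioo m1 N, ∑ m3 ∈ Finset.Icc m2 (N - 1),
      (1 : ℚ) / (((N : ℚ) - (m1 : ℚ)) * ((N : ℚ) - (m2 : ℚ)) * (m3 : ℚ)))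
    (fun k hk => by simp only [mem_Ioo] at *; omega)
    (fun k hk => by simp only [mem_Ioo] at *; omega)]
  refine Finset.sum_congr rfl fun n2 hn2 => ?_
  simp only [mem_Ioo] at hn2
  have hc2 : ((N - n2 : ℕ) : ℚ) = (N : ℚ) - n2 := by
    rw [Nat.cast_sub (by omega)]
  rw [← sum_reflect N (Ioo 0 n2) (Ioo (N - n2) N)
    (fun m2 => ∑ m3 ∈ Finset.Icc m2 (N - 1),
      (1 : ℚ) / (((N : ℚ) - ((N - n2 : ℕ) : ℚ)) * ((N : ℚ) - (m2 : ℚ)) * (m3 : ℚ)))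
    (fun k hk => by simp only [mem_Ioo] at *; omega)
    (fun k hk => by simp only [mem_Ioo] at *; omega)]
  refine Finset.sum_congr rfl fun n1 hn1 => ?_
  simp only [mem_Ioo] at hn1
  have hc1 : ((N - n1 : ℕ) : ℚ) = (N : ℚ) - n1 := by
    rw [Nat.cast_sub (by omega)]
  rw [← sum_reflect N (Icc 1 n1) (Icc (N - n1) (N - 1))
    (fun m3 => (1 : ℚ) / (((N : ℚ) - ((N - n2 : ℕ) : ℚ)) * ((N : ℚ) - ((N - n1 : ℕ) : ℚ)) * (m3 : ℚ)))
    (fun k hk => by simp only [mem_Icc] at *; omega)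
    (fun k hk => by simp only [mem_Icc] at *; omega)]
  refine Finset.sum_congr rfl fun i hi => ?_
  simp only [mem_Icc] at hi
  have hci : ((N - i : ℕ) : ℚ) = (N : ℚ) - i := by
    rw [Nat.cast_sub (by omega)]
  rw [hc1, hc2, hci]
  ring

lemma tele (N n1 n2 : ℕ) (h1 : 0 < n1) (h1N : n1 < N) :
    ∑ i ∈ Icc 1 n1, (1:ℚ)/((n1:ℚ)*(n2:ℚ)*((N:ℚ)+1-(i:ℚ))) =
    ∑ i ∈ Icc 1 n1, (1:ℚ)/((n1:ℚ)*(n2:ℚ)*((N:ℚ)-(i:ℚ)))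
      + ((1:ℚ)/((n1:ℚ)*(n2:ℚ)*(N:ℚ)) - 1/((n1:ℚ)*(n2:ℚ)*((N:ℚ)-(n1:ℚ)))) := by
  have key : ∑ i ∈ Icc 1 n1,
      ((1:ℚ)/((n1:ℚ)*(n2:ℚ)*((N:ℚ)+1-(i:ℚ))) - 1/((n1:ℚ)*(n2:ℚ)*((N:ℚ)-(i:ℚ))))
      = (1:ℚ)/((n1:ℚ)*(n2:ℚ)*(N:ℚ)) - 1/((n1:ℚ)*(n2:ℚ)*((N:ℚ)-(n1:ℚ))) := by
    calc ∑ i ∈ Icc 1 n1,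
        ((1:ℚ)/((n1:ℚ)*(n2:ℚ)*((N:ℚ)+1-(i:ℚ))) - 1/((n1:ℚ)*(n2:ℚ)*((N:ℚ)-(i:ℚ))))
        = ∑ j ∈ range n1,
          ((fun (j:ℕ) => (1:ℚ)/((n1:ℚ)*(n2:ℚ)*((N:ℚ)-(j:ℚ)))) j
            - (fun (j:ℕ) => (1:ℚ)/((n1:ℚ)*(n2:ℚ)*((N:ℚ)-(j:ℚ)))) (j+1)) := by
          rw [← Finset.Ico_add_one_right_eq_Icc, Finset.sum_Ico_eq_sum_range]
          simp only [Nat.add_sub_cancel]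
          refine Finset.sum_congr rfl fun j hj => ?_
          push_cast
          ring
      _ = _ := by
          rw [Finset.sum_range_sub' (fun (j:ℕ) => (1:ℚ)/((n1:ℚ)*(n2:ℚ)*((N:ℚ)-(j:ℚ)))) n1]
          push_cast
          ring
  rw [Finset.sum_sub_distrib] at key
  linarith [key]

lemma top_eq (N n1 : ℕ) (h1 : 0 < n1) (h1N : n1 < N) :
    ∑ i ∈ Icc 1 n1, (1:ℚ)/((n1:ℚ)*(N:ℚ)*((N:ℚ)+1-(i:ℚ))) =
    1/((n1:ℚ)*(N:ℚ)^2) + ∑ n2 ∈ Ioo (N - n1) N, (1:ℚ)/((n1:ℚ)*(N:ℚ)*(n2:ℚ)) := by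
  have hstep : ∑ i ∈ Icc 1 n1, (1:ℚ)/((n1:ℚ)*(N:ℚ)*((N:ℚ)+1-(i:ℚ)))
      = ∑ m ∈ Ioc (N - n1) N, (1:ℚ)/((n1:ℚ)*(N:ℚ)*(m:ℚ)) := by
    rw [← sum_reflect (N+1) (Icc 1 n1) (Ioc (N-n1) N) (fun m => (1:ℚ)/((n1:ℚ)*(N:ℚ)*(m:ℚ)))
      (fun k hk => by simp only [mem_Icc, mem_Ioc] at *; omega)
      (fun k hk => by simp only [mem_Icc, mem_Ioc] at *; omega)]
    refine Finset.sum_congr rfl fun i hi => ?_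
    simp only [mem_Icc] at hi
    have hc : ((N + 1 - i : ℕ):ℚ) = (N:ℚ) + 1 - i := by
      rw [Nat.cast_sub (by omega)]; push_cast; ring
    rw [hc]
  rw [hstep, show Ioc (N - n1) N = insert N (Ioo (N - n1) N) by
      ext x; simp only [mem_Ioc, mem_Ioo, mem_insert]; omega,
    Finset.sum_insert (by simp)]
  congr 1
  ring

lemma main_ind (N : ℕ) :
    ∑ n2 ∈ Ioo 0 N, ∑ n1 ∈ Ioo 0 n2, (1 : ℚ) / ((n1 : ℚ) * (n2 : ℚ) ^ 2) =
    ∑ n2 ∈ Ioo 0 N, ∑ n1 ∈ Ioo 0 n2, ∑ i ∈ Icc 1 n1,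
      (1 : ℚ) / ((n1 : ℚ) * (n2 : ℚ) * ((N : ℚ) - (i : ℚ))) := by
  induction N with
  | zero => simp
  | succ N ih =>
    rcases Nat.eq_zero_or_pos N with h0 | hN
    · subst h0
      have he : Ioo 0 1 = (∅ : Finset ℕ) := by ext x; simp; omega
      simp [he]
    · have hins : Ioo 0 (N + 1) = insert N (Ioo 0 N) := by
        ext x; simp only [mem_insert, mem_Ioo]; omega
      rw [hins, Finset.sum_insert (by simp), Finset.sum_insert (by simp), ih]
      push_cast
      have hRest : (∑ n2 ∈ Ioo 0 N, ∑ n1 ∈ Ioo 0 n2, ∑ i ∈ Icc 1 n1,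
            (1:ℚ)/((n1:ℚ)*(n2:ℚ)*((N:ℚ)+1-(i:ℚ))))
          = (∑ n2 ∈ Ioo 0 N, ∑ n1 ∈ Ioo 0 n2, ∑ i ∈ Icc 1 n1,
            (1:ℚ)/((n1:ℚ)*(n2:ℚ)*((N:ℚ)-(i:ℚ))))
            + ∑ n2 ∈ Ioo 0 N, ∑ n1 ∈ Ioo 0 n2,
              ((1:ℚ)/((n1:ℚ)*(n2:ℚ)*(N:ℚ)) - 1/((n1:ℚ)*(n2:ℚ)*((N:ℚ)-(n1:ℚ)))) := by
        rw [← Finset.sum_add_distrib]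
        refine Finset.sum_congr rfl fun n2 hn2 => ?_
        rw [← Finset.sum_add_distrib]
        refine Finset.sum_congr rfl fun n1 hn1 => ?_
        simp only [mem_Ioo] at hn1 hn2
        exact tele N n1 n2 hn1.1 (by omega)
      have htop : (∑ n1 ∈ Ioo 0 N, ∑ i ∈ Icc 1 n1,
            (1:ℚ)/((n1:ℚ)*(N:ℚ)*((N:ℚ)+1-(i:ℚ))))
          = (∑ n1 ∈ Ioo 0 N, (1:ℚ)/((n1:ℚ)*(N:ℚ)^2))
            + ∑ n1 ∈ Ioo 0 N, ∑ n2 ∈ Ioo (N - n1) N, (1:ℚ)/((n1:ℚ)*(N:ℚ)*(n2:ℚ)) := by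
        rw [← Finset.sum_add_distrib]
        refine Finset.sum_congr rfl fun n1 hn1 => ?_
        simp only [mem_Ioo] at hn1
        exact top_eq N n1 hn1.1 hn1.2
      have hswap : (∑ n2 ∈ Ioo 0 N, ∑ n1 ∈ Ioo 0 n2,
            ((1:ℚ)/((n1:ℚ)*(n2:ℚ)*(N:ℚ)) - 1/((n1:ℚ)*(n2:ℚ)*((N:ℚ)-(n1:ℚ)))))
          = ∑ n1 ∈ Ioo 0 N, ∑ n2 ∈ Ioo n1 N,
            ((1:ℚ)/((n1:ℚ)*(n2:ℚ)*(N:ℚ)) - 1/((n1:ℚ)*(n2:ℚ)*((N:ℚ)-(n1:ℚ)))) :=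
        sum_swap_lt N _
      have hrefl : (∑ n1 ∈ Ioo 0 N, ∑ n2 ∈ Ioo (N - n1) N, (1:ℚ)/((n1:ℚ)*(N:ℚ)*(n2:ℚ)))
          = ∑ k ∈ Ioo 0 N, ∑ n2 ∈ Ioo k N, (1:ℚ)/(((N:ℚ)-(k:ℚ))*(N:ℚ)*(n2:ℚ)) := by
        refine Eq.trans (sum_reflect N (Ioo 0 N) (Ioo 0 N)
          (fun k => ∑ n2 ∈ Ioo (N - k) N, (1:ℚ)/((k:ℚ)*(N:ℚ)*(n2:ℚ)))
          (fun k hk => by simp only [mem_Ioo] at *; omega)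
          (fun k hk => by simp only [mem_Ioo] at *; omega)).symm
          (Finset.sum_congr rfl fun k hk => ?_)
        simp only [mem_Ioo] at hk
        rw [show N - (N - k) = k by omega, Nat.cast_sub (by omega)]
      have hzero : (∑ k ∈ Ioo 0 N, ∑ n2 ∈ Ioo k N, (1:ℚ)/(((N:ℚ)-(k:ℚ))*(N:ℚ)*(n2:ℚ)))
          + (∑ n1 ∈ Ioo 0 N, ∑ n2 ∈ Ioo n1 N,
            ((1:ℚ)/((n1:ℚ)*(n2:ℚ)*(N:ℚ)) - 1/((n1:ℚ)*(n2:ℚ)*((N:ℚ)-(n1:ℚ))))) = 0 := by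
        rw [← Finset.sum_add_distrib]
        refine Finset.sum_eq_zero fun k hk => ?_
        rw [← Finset.sum_add_distrib]
        refine Finset.sum_eq_zero fun n2 hn2 => ?_
        simp only [mem_Ioo] at hk hn2
        have hk0 : (k:ℚ) ≠ 0 := Nat.cast_ne_zero.2 (by omega)
        have hn20 : (n2:ℚ) ≠ 0 := Nat.cast_ne_zero.2 (by omega)
        have hN0 : (N:ℚ) ≠ 0 := Nat.cast_ne_zero.2 (by omega)
        have hNk : (N:ℚ) - (k:ℚ) ≠ 0 :=
          sub_ne_zero.2 (by exact_mod_cast show (N:ℕ) ≠ k by omega)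
        field_simp
        ring
      rw [hRest, htop, hswap, hrefl]
      linarith [hzero]

/-- `ζ_{<N}(1,2) = Σ_{0<m₁<m₂≤m₃<N} 1/((N−m₁)(N−m₂)m₃)`. -/
theorem stmt_6 (N : ℕ) (hN : 0 < N) :
    ∑ n2 ∈ Finset.Ioo 0 N, ∑ n1 ∈ Finset.Ioo 0 n2, (1 : ℚ) / ((n1 : ℚ) * (n2 : ℚ) ^ 2) =
    ∑ m1 ∈ Finset.Ioo 0 N, ∑ m2 ∈ Finset.Ioo m1 N, ∑ m3 ∈ Finset.Icc m2 (N - 1),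
      (1 : ℚ) / (((N : ℚ) - (m1 : ℚ)) * ((N : ℚ) - (m2 : ℚ)) * (m3 : ℚ)) := by
  rw [main_ind N, rhs_eq N]
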